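/- Let n > d be positive integers and let A be a d × n integer matrix such that: the homomorphism ℤⁿ → ℤ^d determined by A is surjective, the d × (n−1) matrix Ā obtained by deleting the first column of A has rank d, and the homomorphism ℤ^{n−1} → ℤ^d determined by Ā is not surjective. Then there exist an invertible d × d integer matrix P (with det P = ±1), an integer m > 1, and integers a_{ij} (1 ≤ i ≤ d, 1 ≤ j ≤ n) such that: (1) PA has first row (a₁₁, m·a₁₂, …, m·a₁ₙ) and i-th row (a_{i1}, a_{i2}, …, a_{in}) for 2 ≤ i ≤ d; (2) gcd(a₁₁, m) = 1; (3) the d × n matrix with first row (1, a₁₂, …, a₁ₙ) and i-th row (0, a_{i2}, …, a_{in}) for 2 ≤ i ≤ d determines a surjection ℤⁿ → ℤ^d. -/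

import Mathlib

open Finset in
lemma sum_fin_split {M : Type*} [AddCommMonoid M] {n : ℕ} (hn : 0 < n) (f : Fin n → M) :
    ∑ j, f j = f ⟨0, hn⟩ + ∑ j : Fin (n-1), f (Fin.cast (by omega) j.succ) := by
  have h : n = (n-1)+1 := by omega
  rw [← (finCongr h.symm).sum_comp]
  rw [Fin.sum_univ_succ]
  congr 1

lemma sum_single_smul {d : ℕ} (x : Fin d → ℤ) : ∑ k, x k • Pi.single k (1:ℤ) = x := by
  ext j
  simp [Pi.single_apply, Finset.sum_ite_eq']

lemma exists_torsion {n' d : ℕ} (Ab : Matrix (Fin d) (Fin n') ℤ) (c : Fin d → ℤ)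
    (hrank : (Ab.map (Int.cast : ℤ → ℚ)).rank = d) :
    ∃ N : ℤ, N ≠ 0 ∧ ∃ v : Fin n' → ℤ, Ab.mulVec v = N • c := by
  classical
  set Abq := Ab.map (Int.cast : ℤ → ℚ) with hAbq
  have htop : LinearMap.range Abq.mulVecLin = ⊤ := by
    apply Submodule.eq_top_of_finrank_eq
    rw [Module.finrank_pi, Fintype.card_fin]
    exact hrank
  have hc : (fun i => (c i : ℚ)) ∈ LinearMap.range Abq.mulVecLin := htop ▸ Submodule.mem_top
  obtain ⟨w, hw⟩ := hc
  obtain ⟨b, hb⟩ := IsLocalization.exist_integer_multiples (nonZeroDivisors ℤ) Finset.univ w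
  choose v hv using fun i => hb i (Finset.mem_univ i)
  refine ⟨(b : ℤ), nonZeroDivisors.coe_ne_zero b, v, ?_⟩
  funext i
  apply Int.cast_injective (α := ℚ)
  show ((Ab.mulVec v) i : ℚ) = (((b:ℤ) • c) i : ℤ)
  have hrhs : ((((b:ℤ) • c) i : ℤ) : ℚ) = ((b:ℤ) : ℚ) * (c i : ℚ) := by
    push_cast [Pi.smul_apply, smul_eq_mul]
    ring
  rw [hrhs]
  have h1 : ((Ab.mulVec v) i : ℚ) = (Abq.mulVec (fun j => (v j : ℚ))) i := by
    show ((∑ j, Ab i j * v j : ℤ) : ℚ) = ∑ j, Abq i j * (v j : ℚ)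
    push_cast
    rfl
  rw [h1]
  have hvq : (fun j => (v j : ℚ)) = fun j => ((b:ℤ):ℚ) * w j := by
    funext j
    have := hv j
    rw [show (algebraMap ℤ ℚ) (v j) = ((v j : ℚ)) from rfl] at this
    rw [this]
    show ((b:ℤ) • w j) = _
    rw [zsmul_eq_mul]
  rw [hvq]
  have h2 : Abq.mulVec (fun j => ((b:ℤ):ℚ) * w j) = ((b:ℤ):ℚ) • Abq.mulVec w := by
    rw [← Matrix.mulVec_smul]
    congr 1
  rw [h2]
  rw [← Matrix.mulVecLin_apply, hw]
  simp

set_option synthInstance.maxHeartbeats 1000000 in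
set_option maxHeartbeats 1000000 in
open Finset in
lemma exists_unimodular {d : ℕ} (hd : 0 < d) (u s : Fin d → ℤ)
    (hus : ∑ k, u k * s k = 1) :
    ∃ P : Matrix (Fin d) (Fin d) ℤ, IsUnit P.det ∧
      (∀ j, P ⟨0, hd⟩ j = u j) ∧
      (∀ y : Fin d → ℤ, ∃ z : Fin d → ℤ, (∑ k, u k * z k = 0) ∧
        ∀ i : Fin d, i ≠ ⟨0, hd⟩ → ∑ k, P i k * z k = y i) := by
  classical
  let ℓ : (Fin d → ℤ) →ₗ[ℤ] ℤ :=
  { toFun := fun x => ∑ k, u k * x k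
    map_add' := fun x y => by simp [mul_add, Finset.sum_add_distrib]
    map_smul' := fun t x => by simp [Finset.mul_sum]; congr 1; ext k; ring }
  have hls : ℓ s = 1 := hus
  have hmem : ∀ x, x - ℓ x • s ∈ LinearMap.ker ℓ := by
    intro x
    simp only [LinearMap.mem_ker, map_sub, map_smul, smul_eq_mul, hls, mul_one, sub_self]
  set K := LinearMap.ker ℓ with hK
  let π : (Fin d → ℤ) →ₗ[ℤ] K :=
    (LinearMap.id - (LinearMap.toSpanSingleton ℤ (Fin d → ℤ) s).comp ℓ).codRestrict K
      (by intro x; simpa [LinearMap.toSpanSingleton] using hmem x)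
  have hπ : ∀ x, (π x : Fin d → ℤ) = x - ℓ x • s := fun x => rfl
  have hπK : ∀ k : K, π (k : Fin d → ℤ) = k := by
    intro k
    apply Subtype.ext
    rw [hπ]
    have : ℓ (k : Fin d → ℤ) = 0 := k.2
    rw [this, zero_smul, sub_zero]
  have hfr : Module.finrank ℤ K = d - 1 := by
    let φ : (Fin d → ℤ) →ₗ[ℤ] K × ℤ := π.prod ℓ
    let ψ : K × ℤ →ₗ[ℤ] (Fin d → ℤ) :=
      K.subtype.comp (LinearMap.fst ℤ K ℤ) +
        (LinearMap.toSpanSingleton ℤ (Fin d → ℤ) s).comp (LinearMap.snd ℤ K ℤ)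
    have hψ : ∀ (k : K) (t : ℤ), ψ (k, t) = (k : Fin d → ℤ) + t • s := by
      intro k t
      simp only [ψ, LinearMap.add_apply, LinearMap.comp_apply, LinearMap.fst_apply,
        LinearMap.snd_apply, LinearMap.toSpanSingleton_apply, Submodule.coe_subtype]
    have h1 : φ.comp ψ = LinearMap.id := by
      apply LinearMap.ext
      rintro ⟨k, t⟩
      have hk : ℓ (k : Fin d → ℤ) = 0 := k.2
      have hlkt : ℓ (ψ (k, t)) = t := by
        rw [hψ, map_add, map_smul, hk, hls]; simp
      apply Prod.ext
      · apply Subtype.ext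
        show (π (ψ (k, t)) : Fin d → ℤ) = (k : Fin d → ℤ)
        rw [hπ, hlkt, hψ]
        abel
      · show ℓ (ψ (k, t)) = t
        exact hlkt
    have h2 : ψ.comp φ = LinearMap.id := by
      apply LinearMap.ext
      intro x
      show ψ (π x, ℓ x) = x
      rw [hψ, hπ]
      abel
    let E : (Fin d → ℤ) ≃ₗ[ℤ] K × ℤ := LinearEquiv.ofLinear φ ψ h1 h2
    have := E.finrank_eq
    rw [Module.finrank_pi, Module.finrank_prod, Module.finrank_self, Fintype.card_fin] at this
    omega
  let bK : Module.Basis (Fin (d-1)) ℤ K := (Module.finBasis ℤ K).reindex (finCongr (by rw [hfr]))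
  let P : Matrix (Fin d) (Fin d) ℤ := fun i j =>
    if h : i.val = 0 then u j
    else bK.coord ⟨i.val - 1, by have := i.isLt; omega⟩ (π (Pi.single j 1))
  have hrow : ∀ (i : Fin d) (h : ¬ i.val = 0) (x : Fin d → ℤ),
      ∑ k, P i k * x k = bK.coord ⟨i.val - 1, by have := i.isLt; omega⟩ (π x) := by
    intro i h x
    have : P i = fun j => bK.coord ⟨i.val - 1, by have := i.isLt; omega⟩ (π (Pi.single j 1)) := by
      funext j; simp only [P, dif_neg h]
    rw [this]
    conv_rhs => rw [← sum_single_smul x, map_sum, map_sum]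
    simp only [map_smul, smul_eq_mul]
    exact Finset.sum_congr rfl fun k _ => by ring
  have hrow0 : ∀ j, P ⟨0, hd⟩ j = u j := fun j => by simp [P]
  refine ⟨P, ?_, hrow0, ?_⟩
  · let Q : Matrix (Fin d) (Fin d) ℤ := fun k i =>
      if h : i.val = 0 then s k
      else (bK ⟨i.val - 1, by have := i.isLt; omega⟩ : Fin d → ℤ) k
    apply Matrix.isUnit_det_of_right_inverse (B := Q)
    ext i i'
    rw [Matrix.mul_apply, Matrix.one_apply]
    by_cases h' : i'.val = 0
    · have hQ : ∀ k, Q k i' = s k := fun k => by simp [Q, h']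
      simp only [hQ]
      by_cases h : i.val = 0
      · have : i = i' := Fin.ext (by omega)
        simp only [this, if_pos rfl]
        calc ∑ k, P i' k * s k = ∑ k, u k * s k := by
              refine Finset.sum_congr rfl fun k _ => ?_
              have : i' = ⟨0, hd⟩ := Fin.ext h'
              rw [this, hrow0]
            _ = 1 := hus
      · have hne : ¬ i = i' := fun hc => h (by rw [hc]; exact h')
        rw [if_neg hne, hrow i h]
        have : π s = 0 := by
          apply Subtype.ext
          rw [hπ, hls, one_smul, sub_self]
          rfl
        rw [this, map_zero]
    · have hQ : ∀ k, Q k i' = (bK ⟨i'.val - 1, by have := i'.isLt; omega⟩ : Fin d → ℤ) k :=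
        fun k => by simp [Q, h']
      simp only [hQ]
      by_cases h : i.val = 0
      · have hne : ¬ i = i' := fun hc => h' (by rw [← hc]; exact h)
        rw [if_neg hne]
        have hP : ∀ k, P i k = u k := fun k => by
          have : i = ⟨0, hd⟩ := Fin.ext h
          rw [this, hrow0]
        simp only [hP]
        exact (bK ⟨i'.val - 1, by have := i'.isLt; omega⟩).2
      · rw [hrow i h, hπK]
        rw [Module.Basis.coord_apply, Module.Basis.repr_self, Finsupp.single_apply]
        have heq : (⟨i'.val - 1, by have := i'.isLt; omega⟩ : Fin (d-1)) =
            (⟨i.val - 1, by have := i.isLt; omega⟩ : Fin (d-1)) ↔ i = i' := by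
          constructor
          · intro hc
            simp only [Fin.mk.injEq] at hc
            exact Fin.ext (by omega)
          · intro hc; subst hc; rfl
        by_cases hii : i = i'
        · rw [if_pos hii, if_pos (heq.mpr hii)]
        · rw [if_neg hii, if_neg (fun hc => hii (heq.mp hc))]
  · intro y
    let ι : Fin (d-1) → Fin d := fun b => ⟨b.val + 1, by have := b.isLt; omega⟩
    let zK : K := ∑ b, y (ι b) • bK b
    refine ⟨(zK : Fin d → ℤ), zK.2, ?_⟩
    intro i hi
    have h : ¬ i.val = 0 := fun hc => hi (Fin.ext hc)
    rw [hrow i h, hπK, Module.Basis.coord_apply]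
    rw [map_sum bK.repr]
    simp only [map_smul, Module.Basis.repr_self]
    rw [Finsupp.coe_finset_sum]
    simp only [Finset.sum_apply, Finsupp.coe_smul, Pi.smul_apply, Finsupp.single_apply,
      smul_eq_mul, mul_ite, mul_one, mul_zero]
    rw [Finset.sum_ite_eq' Finset.univ]
    simp only [Finset.mem_univ, if_pos]
    congr 1
    refine Fin.ext ?_
    show (i.val - 1) + 1 = i.val
    omega

set_option maxHeartbeats 1000000 in
/-- **Lemma 5.** If `A` determines a surjection `ℤⁿ → ℤ^d`, and the matrix `Ā` obtained by
deleting the first column of `A` has rank `d` over `ℚ` but does not determine a surjection,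
then there are an invertible integer matrix `P`, an integer `m > 1` and integers `aᵢⱼ` such
that `P·A` has first row `(a₁₁, m·a₁₂, …, m·a₁ₙ)` and `i`-th row `(aᵢ₁, …, aᵢₙ)` for `i ≥ 2`,
with `gcd(a₁₁, m) = 1`, and such that the matrix with first row `(1, a₁₂, …, a₁ₙ)` and `i`-th
row `(0, aᵢ₂, …, aᵢₙ)` determines a surjection `ℤⁿ → ℤ^d`. -/
theorem stmt_7 (n d : ℕ) (hd : 0 < d) (hdn : d < n)
    (A : Matrix (Fin d) (Fin n) ℤ)
    (hAsurj : Function.Surjective A.mulVec)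
    (hrank : ((A.submatrix id fun j : Fin (n - 1) =>
        Fin.cast (by omega) j.succ).map (Int.cast : ℤ → ℚ)).rank = d)
    (hAbar : ¬ Function.Surjective
      (A.submatrix id fun j : Fin (n - 1) => Fin.cast (by omega) j.succ).mulVec) :
    ∃ (P : Matrix (Fin d) (Fin d) ℤ) (m : ℤ) (a : Matrix (Fin d) (Fin n) ℤ),
      IsUnit P.det ∧ 1 < m ∧
      (P * A) ⟨0, hd⟩ ⟨0, by omega⟩ = a ⟨0, hd⟩ ⟨0, by omega⟩ ∧
      (∀ j : Fin n, j ≠ ⟨0, by omega⟩ → (P * A) ⟨0, hd⟩ j = m * a ⟨0, hd⟩ j) ∧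
      (∀ i : Fin d, i ≠ ⟨0, hd⟩ → ∀ j : Fin n, (P * A) i j = a i j) ∧
      Int.gcd (a ⟨0, hd⟩ ⟨0, by omega⟩) m = 1 ∧
      Function.Surjective (Matrix.mulVec (fun (i : Fin d) (j : Fin n) =>
        if j = ⟨0, by omega⟩ then (if i = ⟨0, hd⟩ then 1 else 0) else a i j)) := by
  classical
  have hn : 0 < n := by omega
  set z0 : Fin n := ⟨0, hn⟩ with hz0def
  set z0d : Fin d := ⟨0, hd⟩ with hz0ddef
  let emb : Fin (n-1) → Fin n := fun j => Fin.cast (by omega : n - 1 + 1 = n) j.succ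
  let Ab : Matrix (Fin d) (Fin (n-1)) ℤ := A.submatrix id emb
  let c : Fin d → ℤ := fun i => A i z0
  let M : Submodule ℤ (Fin d → ℤ) := LinearMap.range Ab.mulVecLin
  -- decomposition of A.mulVec
  have hdec : ∀ v : Fin n → ℤ,
      A.mulVec v = v z0 • c + Ab.mulVec (fun j => v (emb j)) := by
    intro v
    funext i
    show ∑ j, A i j * v j = v z0 * c i + ∑ j, Ab i j * v (emb j)
    rw [sum_fin_split hn (fun j => A i j * v j)]
    congr 1
    · show A i z0 * v z0 = v z0 * c i
      ring
  -- cyclicity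
  have hcyc : ∀ x : Fin d → ℤ, ∃ t : ℤ, x - t • c ∈ M := by
    intro x
    obtain ⟨v, hv⟩ := hAsurj x
    refine ⟨v z0, ⟨fun j => v (emb j), ?_⟩⟩
    rw [Matrix.mulVecLin_apply]
    rw [← hv, hdec v]
    abel
  -- torsion
  obtain ⟨N, hN0, vN, hvN⟩ := exists_torsion Ab c hrank
  -- the ideal I and m
  let I : Ideal ℤ := Submodule.comap (LinearMap.toSpanSingleton ℤ (Fin d → ℤ) c) M
  have hImem : ∀ t : ℤ, t ∈ I ↔ t • c ∈ M := fun t => Iff.rfl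
  let g : ℤ := Submodule.IsPrincipal.generator I
  have hgen : Ideal.span {g} = I := Submodule.IsPrincipal.span_singleton_generator I
  have hIdvd : ∀ t : ℤ, t ∈ I ↔ g ∣ t := by
    intro t
    rw [← hgen, Ideal.mem_span_singleton]
  set m : ℤ := |g| with hmdef
  have hmdvd : ∀ t : ℤ, t ∈ I ↔ m ∣ t := by
    intro t
    rw [hIdvd, hmdef, abs_dvd]
  have hgne : g ≠ 0 := by
    intro hg
    have : N ∈ I := (hImem N).2 ⟨vN, by rw [Matrix.mulVecLin_apply, hvN]⟩
    rw [hIdvd] at this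
    rw [hg] at this
    exact hN0 (zero_dvd_iff.mp this)
  have hMne : ¬ (1:ℤ) ∈ I := by
    intro h1
    apply hAbar
    intro y
    have hcM : c ∈ M := by simpa using (hImem 1).1 h1
    have hyM : y ∈ M := by
      obtain ⟨t, ht⟩ := hcyc y
      have := M.add_mem ht (M.smul_mem t hcM)
      simpa using this
    obtain ⟨w, hw⟩ := hyM
    exact ⟨w, by rw [← Matrix.mulVecLin_apply]; exact hw⟩
  have hm1 : 1 < m := by
    have h0 : 0 < m := abs_pos.mpr hgne
    rcases lt_or_eq_of_le (show 1 ≤ m by omega) with h | h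
    · exact h
    · exfalso
      apply hMne
      rw [hmdvd]
      exact (by rw [← h] : m ∣ 1)
  have hmc : m • c ∈ M := by
    rw [← hImem, hmdvd]
  -- u_raw
  choose uraw huraw using fun i : Fin d => hcyc (Pi.single i 1)
  have hx : ∀ x : Fin d → ℤ, x - (∑ i, uraw i * x i) • c ∈ M := by
    intro x
    have heq : x - (∑ i, uraw i * x i) • c
        = ∑ i, x i • (Pi.single i 1 - uraw i • c) := by
      simp only [smul_sub]
      rw [Finset.sum_sub_distrib, sum_single_smul x]
      congr 1
      rw [Finset.sum_smul]
      exact Finset.sum_congr rfl fun i _ => by rw [smul_smul, mul_comm]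
    rw [heq]
    exact Submodule.sum_mem M fun i _ => M.smul_mem (x i) (huraw i)
  -- membership criterion with uraw
  have hmemM : ∀ x : Fin d → ℤ, x ∈ M ↔ m ∣ ∑ i, uraw i * x i := by
    intro x
    constructor
    · intro hxM
      have h1 : (∑ i, uraw i * x i) • c ∈ M := by
        have := M.sub_mem hxM (hx x)
        simpa using this
      exact (hmdvd _).1 ((hImem _).2 h1)
    · intro hdvd
      obtain ⟨k, hk⟩ := hdvd
      have h1 : (∑ i, uraw i * x i) • c ∈ M := by
        rw [hk, mul_comm, mul_smul]
        exact M.smul_mem k hmc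
      have := M.add_mem (hx x) h1
      simpa using this
  -- c pairing
  have hDc : m ∣ (∑ i, uraw i * c i) - 1 := by
    have h1 : c - (∑ i, uraw i * c i) • c ∈ M := hx c
    have h2 : (1 - ∑ i, uraw i * c i) • c ∈ M := by
      rw [sub_smul, one_smul]
      exact h1
    have h3 := (hmdvd _).1 ((hImem _).2 h2)
    exact (dvd_sub_comm).mp h3
  -- gcd of uraw : generator of span of range
  let J : Ideal ℤ := Ideal.span (Set.range uraw)
  let g2 : ℤ := Submodule.IsPrincipal.generator J
  have hJgen : Ideal.span {g2} = J := Submodule.IsPrincipal.span_singleton_generator J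
  have hg2dvd : ∀ i, g2 ∣ uraw i := by
    intro i
    have : uraw i ∈ J := Ideal.subset_span (Set.mem_range_self i)
    rw [← hJgen, Ideal.mem_span_singleton] at this
    exact this
  obtain ⟨y, hy⟩ : ∃ y : Fin d → ℤ, ∑ i, y i • uraw i = g2 := by
    have : g2 ∈ J := Submodule.IsPrincipal.generator_mem J
    exact (Submodule.mem_span_range_iff_exists_fun ℤ).1 this
  have hg2ne : g2 ≠ 0 := by
    intro hg2
    have hz : ∀ i, uraw i = 0 := by
      intro i
      have := hg2dvd i
      rw [hg2] at this
      exact zero_dvd_iff.mp this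
    have hdd : m ∣ (0:ℤ) - 1 := by
      have h := hDc
      rw [Finset.sum_congr rfl (fun i _ => by rw [hz i, zero_mul])] at h
      simpa using h
    have h1 : m ∣ (1:ℤ) := by
      have : ((0:ℤ) - 1) = -1 := by norm_num
      rw [this] at hdd
      exact (dvd_neg).mp hdd
    have := Int.le_of_dvd one_pos h1
    omega
  let u : Fin d → ℤ := fun i => uraw i / g2
  have hgu : ∀ i, g2 * u i = uraw i := fun i => Int.mul_ediv_cancel' (hg2dvd i)
  have hus : ∑ k, u k * y k = 1 := by
    have h1 : g2 * (∑ k, u k * y k) = g2 * 1 := by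
      rw [mul_one, Finset.mul_sum]
      refine (Finset.sum_congr rfl fun k _ => ?_).trans hy
      rw [smul_eq_mul, ← hgu k]
      ring
    exact mul_left_cancel₀ hg2ne h1
  -- coprimality facts
  set Duc : ℤ := ∑ k, u k * c k with hDucdef
  have hfactor : ∀ x : Fin d → ℤ, ∑ i, uraw i * x i = g2 * ∑ i, u i * x i := by
    intro x
    rw [Finset.mul_sum]
    exact Finset.sum_congr rfl fun i _ => by rw [← hgu i]; ring
  obtain ⟨q, hq⟩ : ∃ q, g2 * Duc - 1 = m * q := by
    have := hDc
    rw [hfactor c] at this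
    exact this
  have hcop_m_g2 : IsCoprime m g2 := ⟨-q, Duc, by linarith [hq]⟩
  have hcop_Duc_m : IsCoprime Duc m := ⟨g2, -q, by linarith [hq]⟩
  -- final membership criteria with u
  have hMu : ∀ x : Fin d → ℤ, x ∈ M → m ∣ ∑ i, u i * x i := by
    intro x hxM
    have := (hmemM x).1 hxM
    rw [hfactor x] at this
    exact hcop_m_g2.dvd_of_dvd_mul_left this
  have hum0 : ∀ x : Fin d → ℤ, (∑ i, u i * x i) = 0 → x ∈ M := by
    intro x h0
    apply (hmemM x).2
    rw [hfactor x, h0, mul_zero]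
    exact dvd_zero m
  -- columns of Ab are in M
  have hcol : ∀ j : Fin (n-1), (fun i => A i (emb j)) ∈ M := by
    intro j
    refine ⟨Pi.single j 1, ?_⟩
    rw [Matrix.mulVecLin_apply]
    have hcol1 : Ab.mulVec (Pi.single j (1:ℤ)) = fun i => Ab i j := by
      funext i
      rw [Matrix.mulVec_single]
      exact mul_one _
    rw [hcol1]
    rfl
  -- get P
  obtain ⟨P, hPdet, hProw0, hPsolve⟩ := exists_unimodular hd u y hus
  -- row computations for P * A
  have hPA0 : ∀ j : Fin n, (P * A) z0d j = ∑ k, u k * A k j := by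
    intro j
    rw [Matrix.mul_apply]
    exact Finset.sum_congr rfl fun k _ => by rw [hz0ddef, hProw0]
  -- divisibility of first row on later columns
  have hdvdcol : ∀ j : Fin n, j ≠ z0 → m ∣ ∑ k, u k * A k j := by
    intro j hj
    have hjval : j.val ≠ 0 := fun hc => hj (Fin.ext hc)
    set j' : Fin (n-1) := ⟨j.val - 1, by omega⟩ with hj'def
    have hembj : emb j' = j := by
      refine Fin.ext ?_
      show (j.val - 1) + 1 = j.val
      omega
    have := hMu _ (hcol j')
    rw [hembj] at this
    exact this
  -- the matrix a
  let a : Matrix (Fin d) (Fin n) ℤ := fun i j =>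
    if i.val = 0 then (if j.val = 0 then Duc else (∑ k, u k * A k j) / m)
    else (P * A) i j
  refine ⟨P, m, a, hPdet, hm1, ?_, ?_, ?_, ?_, ?_⟩
  · -- (0,0) entry
    show (P * A) z0d z0 = a z0d z0
    rw [hPA0]
    show ∑ k, u k * A k z0 = a z0d z0
    have : a z0d z0 = Duc := by simp [a, hz0ddef, hz0def]
    rw [this, hDucdef]
  · -- first row, later columns
    intro j hj
    show (P * A) z0d j = m * a z0d j
    have hjval : j.val ≠ 0 := fun hc => hj (by rw [hz0def] at *; exact Fin.ext hc)
    have haj : a z0d j = (∑ k, u k * A k j) / m := by simp [a, hjval, hz0ddef]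
    rw [hPA0, haj, Int.mul_ediv_cancel' (hdvdcol j (by rw [hz0def] at *; exact hj))]
  · -- other rows
    intro i hi j
    have hival : i.val ≠ 0 := fun hc => hi (Fin.ext hc)
    show (P * A) i j = a i j
    simp [a, hival]
  · -- gcd
    show Int.gcd (a z0d z0) m = 1
    have : a z0d z0 = Duc := by simp [a, hz0ddef, hz0def]
    rw [this]
    exact Int.isCoprime_iff_gcd_eq_one.mp hcop_Duc_m
  · -- surjectivity
    intro ytar
    obtain ⟨z, hz0sum, hzrow⟩ := hPsolve ytar
    obtain ⟨w, hw⟩ := hum0 z hz0sum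
    rw [Matrix.mulVecLin_apply] at hw
    set B : Matrix (Fin d) (Fin n) ℤ := fun i j =>
      if j = ⟨0, by omega⟩ then (if i = ⟨0, hd⟩ then 1 else 0) else a i j with hBdef
    let x : Fin n → ℤ := fun j =>
      if h : j.val = 0 then ytar z0d - ∑ j', a z0d (emb j') * w j'
      else w ⟨j.val - 1, by have := j.isLt; omega⟩
    refine ⟨x, ?_⟩
    funext i
    show ∑ j, B i j * x j = ytar i
    rw [sum_fin_split hn (fun j => B i j * x j)]
    change B i ⟨0, hn⟩ * x ⟨0, hn⟩ + ∑ j : Fin (n-1), B i (emb j) * x (emb j) = ytar i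
    have hxz0 : x ⟨0, hn⟩ = ytar z0d - ∑ j', a z0d (emb j') * w j' := by simp [x]
    have hxemb : ∀ j' : Fin (n-1), x (emb j') = w j' := by
      intro j'
      have h1 : (emb j').val = j'.val + 1 := rfl
      have h2 : ¬ (emb j').val = 0 := by omega
      show x (emb j') = w j'
      simp only [x, dif_neg h2]
      congr 1
    have hBemb : ∀ j' : Fin (n-1), B i (emb j') = a i (emb j') := by
      intro j'
      have h1 : (emb j').val = j'.val + 1 := rfl
      have h2 : ¬ emb j' = (⟨0, by omega⟩ : Fin n) := by
        intro hc
        have h3 : (emb j').val = 0 := by rw [hc]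
        have h4 : (emb j').val = j'.val + 1 := rfl
        omega
      simp only [B, if_neg h2]
    simp only [hxz0, hxemb, hBemb]
    by_cases hi : i = z0d
    · have hB0 : B i ⟨0, hn⟩ = 1 := by
        subst hi
        simp [B, hz0ddef]
      rw [hB0, hi]
      ring
    · have hB0 : B i ⟨0, hn⟩ = 0 := by
        have : ¬ i = (⟨0, hd⟩ : Fin d) := hi
        simp [B, this]
      rw [hB0, zero_mul, zero_add]
      have haPA : ∀ j' : Fin (n-1), a i (emb j') = (P * A) i (emb j') := by
        intro j'
        have hival : i.val ≠ 0 := fun hc => hi (Fin.ext hc)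
        simp [a, hival]
      calc ∑ j', a i (emb j') * w j'
          = ∑ j', ∑ k, (P i k * A k (emb j')) * w j' := by
            refine Finset.sum_congr rfl fun j' _ => ?_
            rw [haPA, Matrix.mul_apply, Finset.sum_mul]
        _ = ∑ k, P i k * ∑ j', A k (emb j') * w j' := by
            rw [Finset.sum_comm]
            refine Finset.sum_congr rfl fun k _ => ?_
            rw [Finset.mul_sum]
            exact Finset.sum_congr rfl fun j' _ => by ring
        _ = ∑ k, P i k * z k := by
            refine Finset.sum_congr rfl fun k _ => ?_
            congr 1
            have := congrFun hw k
            exact this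
        _ = ytar i := hzrow i hi
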